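/- arXiv:1412.4396 — 5 statements merged into one kernel-verified Lean document; each statement's English description precedes it below -/
import Mathlib

section
/- The exponential map is injective on the set of Hermitian n×n complex matrices. -/
open Matrix

/-- The matrix exponential is injective on Hermitian matrices. -/
theorem exp_injective_on_hermitian (n : ℕ)
    (X Y : Matrix (Fin n) (Fin n) ℂ)
    (hX : X.IsHermitian) (hY : Y.IsHermitian)
    (h : NormedSpace.exp X = NormedSpace.exp Y) : X = Y := by
  have hX' : IsSelfAdjoint X := hX
  have hY' : IsSelfAdjoint Y := hY
  open scoped Matrix.Norms.L2Operator in
  have hxy : NormedSpace.exp X = NormedSpace.exp Y := by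
    exact h
  open scoped Matrix.Norms.L2Operator in
  calc X = CFC.log (NormedSpace.exp X) := (CFC.log_exp X hX').symm
    _ = CFC.log (NormedSpace.exp Y) := by rw [hxy]
    _ = Y := CFC.log_exp Y hY'
end

section
/- If g ∈ GL(n,ℂ) satisfies (g*)g = g(g*) (i.e., g is normal) and f_t is the polar deformation retraction, then the whole path t ↦ f_t(g) consists of normal matrices. -/
open Matrix NormedSpace

/-- If a matrix commutes with `exp ((2:ℂ) • X)` for Hermitian `X`, it commutes with `X`. -/
lemma commute_of_commute_exp_two_smul {n : ℕ} (A X : Matrix (Fin n) (Fin n) ℂ)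
    (hX : X.IsHermitian)
    (h : A * exp ((2 : ℂ) • X) = exp ((2 : ℂ) • X) * A) : A * X = X * A := by
  set U : Matrix (Fin n) (Fin n) ℂ := (hX.eigenvectorUnitary : Matrix (Fin n) (Fin n) ℂ) with hU
  set d : Fin n → ℝ := hX.eigenvalues with hd
  have hU1 : U * star U = 1 := (Matrix.mem_unitaryGroup_iff).mp (hX.eigenvectorUnitary).2
  have hU2 : star U * U = 1 := (Matrix.mem_unitaryGroup_iff').mp (hX.eigenvectorUnitary).2
  have hspec : X = U * diagonal (fun i => (d i : ℂ)) * star U := hX.spectral_theorem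
  have cancel : ∀ M N : Matrix (Fin n) (Fin n) ℂ,
      U * M * star U = U * N * star U → M = N := by
    intro M N hMN
    have h1 := congrArg (fun Z => star U * Z * U) hMN
    calc M = (star U * U) * M * (star U * U) := by rw [hU2]; rw [one_mul, mul_one]
      _ = star U * (U * M * star U) * U := by noncomm_ring
      _ = star U * (U * N * star U) * U := by rw [hMN]
      _ = (star U * U) * N * (star U * U) := by noncomm_ring
      _ = N := by rw [hU2]; rw [one_mul, mul_one]
  have h2X : (2 : ℂ) • X = U * diagonal (fun i => (2 : ℂ) * (d i : ℂ)) * star U := by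
    have hdiag : diagonal (fun i => (2 : ℂ) * (d i : ℂ))
        = (2 : ℂ) • diagonal (fun i => (d i : ℂ)) := by
      rw [← diagonal_smul]
      congr 1
    rw [hspec, hdiag, mul_smul_comm, smul_mul_assoc]
  -- the unit corresponding to U
  let u : (Matrix (Fin n) (Fin n) ℂ)ˣ := ⟨U, star U, hU1, hU2⟩
  have hexp2X : exp ((2 : ℂ) • X)
      = U * diagonal (fun i => Complex.exp ((2 : ℂ) * (d i : ℂ))) * star U := by
    have hconj := Matrix.exp_units_conj u (diagonal (fun i => (2 : ℂ) * (d i : ℂ)))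
    rw [Matrix.exp_diagonal] at hconj
    rw [h2X]
    have hfun : (fun i => Complex.exp ((2 : ℂ) * (d i : ℂ)))
        = exp (fun i : Fin n => (2 : ℂ) * (d i : ℂ)) := by
      rw [Pi.exp_def]
      funext i
      rw [Complex.exp_eq_exp_ℂ]
    rw [hfun]
    exact hconj
  set B : Matrix (Fin n) (Fin n) ℂ := star U * A * U with hB
  have hAB : A = U * B * star U := by
    rw [hB]
    calc A = (U * star U) * A * (U * star U) := by rw [hU1]; rw [one_mul, mul_one]
      _ = U * (star U * A * U) * star U := by noncomm_ring
  -- B commutes with the diagonal of exponentials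
  set w : Fin n → ℂ := fun i => Complex.exp ((2 : ℂ) * (d i : ℂ)) with hw
  have hBw : B * diagonal w = diagonal w * B := by
    apply cancel
    calc U * (B * diagonal w) * star U
        = (U * B * star U) * (U * diagonal w * star U) := by
          rw [mul_assoc (U * B) (star U) (U * diagonal w * star U)]
          rw [show star U * (U * diagonal w * star U) = (star U * U) * diagonal w * star U by
            noncomm_ring, hU2, one_mul]
          noncomm_ring
      _ = A * exp ((2 : ℂ) • X) := by rw [← hAB, ← hexp2X]
      _ = exp ((2 : ℂ) • X) * A := h
      _ = (U * diagonal w * star U) * (U * B * star U) := by rw [← hAB, ← hexp2X]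
      _ = U * (diagonal w * B) * star U := by
          rw [mul_assoc (U * diagonal w) (star U) (U * B * star U)]
          rw [show star U * (U * B * star U) = (star U * U) * B * star U by
            noncomm_ring, hU2, one_mul]
          noncomm_ring
  -- entrywise, conclude B commutes with diagonal d
  have hBd : B * diagonal (fun i => (d i : ℂ)) = diagonal (fun i => (d i : ℂ)) * B := by
    ext i j
    simp only [mul_diagonal, diagonal_mul]
    by_cases hb : B i j = 0
    · simp [hb]
    · have hwij : B i j * w j = w i * B i j := by
        have := congrFun (congrFun hBw i) j
        simpa [mul_diagonal, diagonal_mul] using this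
      have hexp_eq : w j = w i := by
        rw [mul_comm (w i) (B i j)] at hwij
        exact mul_left_cancel₀ hb hwij
      have habs := congrArg (‖·‖) hexp_eq
      rw [hw] at habs
      simp only [Complex.norm_exp] at habs
      have hre : ((2 : ℂ) * (d j : ℂ)).re = ((2 : ℂ) * (d i : ℂ)).re :=
        Real.exp_injective habs
      have hdd : d j = d i := by simpa using hre
      rw [hdd]
      ring
  -- transfer back
  rw [hAB, hspec]
  calc U * B * star U * (U * diagonal (fun i => (d i : ℂ)) * star U)
      = U * (B * (star U * U) * diagonal (fun i => (d i : ℂ))) * star U := by noncomm_ring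
    _ = U * (B * diagonal (fun i => (d i : ℂ))) * star U := by rw [hU2, mul_one]
    _ = U * (diagonal (fun i => (d i : ℂ)) * B) * star U := by rw [hBd]
    _ = U * (diagonal (fun i => (d i : ℂ)) * (star U * U) * B) * star U := by
        rw [hU2, mul_one]
    _ = U * diagonal (fun i => (d i : ℂ)) * star U * (U * B * star U) := by noncomm_ring

/-- If `g ∈ GL(n,ℂ)` is normal, then the whole polar-retraction path
`t ↦ f_t(g) = g * exp(-tX)` consists of normal matrices. -/
theorem polar_retraction_preserves_normal (n : ℕ)
    (g X : Matrix (Fin n) (Fin n) ℂ)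
    (hg : IsUnit g) (hnormal : gᴴ * g = g * gᴴ)
    (hX : X.IsHermitian) (hgX : gᴴ * g = NormedSpace.exp ((2 : ℂ) • X)) :
    ∀ t ∈ Set.Icc (0:ℝ) 1,
      (g * NormedSpace.exp (-(t : ℂ) • X))ᴴ * (g * NormedSpace.exp (-(t : ℂ) • X)) =
        (g * NormedSpace.exp (-(t : ℂ) • X)) * (g * NormedSpace.exp (-(t : ℂ) • X))ᴴ := by
  intro t _
  set E : Matrix (Fin n) (Fin n) ℂ := exp (-(t : ℂ) • X) with hE
  -- g commutes with exp (2 • X)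
  have hcomm_exp : g * exp ((2 : ℂ) • X) = exp ((2 : ℂ) • X) * g := by
    rw [← hgX]
    calc g * (gᴴ * g) = (g * gᴴ) * g := by noncomm_ring
      _ = (gᴴ * g) * g := by rw [hnormal]
  have hgXc : g * X = X * g := commute_of_commute_exp_two_smul g X hX hcomm_exp
  have hgXc' : Commute g X := hgXc
  -- E is Hermitian (self-conjTranspose)
  have hEH : Eᴴ = E := by
    rw [hE, ← Matrix.exp_conjTranspose]
    congr 1
    rw [Matrix.conjTranspose_smul, hX.eq]
    congr 1
    simp [Complex.ext_iff]
  have hgE : Commute g E := (hgXc'.smul_right (-(t : ℂ))).exp_right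
  have hEE : E * E = exp ((-(2 * t) : ℂ) • X) := by
    have hadd := Matrix.exp_add_of_commute
      (-(t : ℂ) • X) (-(t : ℂ) • X) (Commute.refl _)
    rw [hE, ← hadd, ← add_smul]
    congr 1
    ring_nf
  have hEexp2 : Commute E (exp ((2 : ℂ) • X)) :=
    (((Commute.refl X).smul_left (-(t : ℂ))).smul_right (2 : ℂ)).exp
  have hgHE : gᴴ * E = E * gᴴ := by
    have h1 := congrArg conjTranspose hgE.eq
    rw [Matrix.conjTranspose_mul, Matrix.conjTranspose_mul, hEH] at h1
    exact h1.symm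
  have hcc : Commute (exp ((-(2 * t) : ℂ) • X)) (exp ((2 : ℂ) • X)) :=
    (((Commute.refl X).smul_left (-(2 * t : ℂ))).smul_right (2 : ℂ)).exp
  rw [Matrix.conjTranspose_mul, hEH]
  calc E * gᴴ * (g * E) = E * (gᴴ * g) * E := by noncomm_ring
    _ = E * exp ((2 : ℂ) • X) * E := by rw [hgX]
    _ = E * (E * exp ((2 : ℂ) • X)) := by rw [mul_assoc, ← hEexp2.eq]
    _ = exp ((-(2 * t) : ℂ) • X) * exp ((2 : ℂ) • X) := by rw [← mul_assoc, hEE]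
    _ = exp ((2 : ℂ) • X) * exp ((-(2 * t) : ℂ) • X) := hcc.eq
    _ = gᴴ * g * (E * E) := by rw [← hgX, ← hEE]
    _ = g * gᴴ * (E * E) := by rw [hnormal]
    _ = g * (gᴴ * E) * E := by noncomm_ring
    _ = g * (E * gᴴ) * E := by rw [hgHE]
    _ = g * E * (gᴴ * E) := by noncomm_ring
    _ = g * E * (E * gᴴ) := by rw [hgHE]
end

section
/- Let K act by conjugation on G where K ⊆ G are topological groups, and suppose H : [0,1] × G → G is a K-equivariant strong deformation retraction of G onto K. Then the induced map on the diagonal conjugation quotients gives a strong deformation retraction of G^r/K onto K^r/K. -/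
/-- The setoid on `G^r` identifying tuples simultaneously conjugate by an element of `K`. -/
def conjKSetoid (G : Type*) [Group G] (K : Subgroup G) (r : ℕ) : Setoid (Fin r → G) :=
  ⟨fun x y => ∃ k ∈ K, ∀ i, y i = k * x i * k⁻¹, by
    constructor
    · intro x; exact ⟨1, K.one_mem, by simp⟩
    · rintro x y ⟨k, hkK, hk⟩
      exact ⟨k⁻¹, K.inv_mem hkK, fun i => by simp [hk i, mul_assoc]⟩
    · rintro x y z ⟨k, hkK, hk⟩ ⟨k', hk'K, hk'⟩
      exact ⟨k' * k, K.mul_mem hk'K hkK, fun i => by simp [hk' i, hk i, mul_assoc]⟩⟩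

theorem conjK_mk_isOpenQuotientMap (G : Type*) [Group G] [TopologicalSpace G]
    [IsTopologicalGroup G] (K : Subgroup G) (r : ℕ) :
    IsOpenQuotientMap (Quotient.mk (conjKSetoid G K r)) := by
  refine ⟨Quotient.exists_rep, continuous_quotient_mk', ?_⟩
  intro U hU
  rw [isOpen_coinduced]
  show IsOpen (Quotient.mk (conjKSetoid G K r) ⁻¹' (Quotient.mk (conjKSetoid G K r) '' U))
  have : Quotient.mk (conjKSetoid G K r) ⁻¹' (Quotient.mk (conjKSetoid G K r) '' U) =
      ⋃ k ∈ K, (fun y : Fin r → G => fun i => k * y i * k⁻¹) '' U := by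
    ext y
    simp only [Set.mem_preimage, Set.mem_image, Set.mem_iUnion]
    constructor
    · rintro ⟨x, hxU, hxy⟩
      obtain ⟨k, hkK, hk⟩ := Quotient.exact hxy
      exact ⟨k, hkK, x, hxU, (funext fun i => (hk i).symm)⟩
    · rintro ⟨k, hkK, x, hxU, rfl⟩
      exact ⟨x, hxU, Quotient.sound ⟨k, hkK, fun i => rfl⟩⟩
  rw [this]
  refine isOpen_biUnion fun k _ => ?_
  have hc : Continuous fun y : Fin r → G => fun i => k⁻¹ * y i * k⁻¹⁻¹ := by
    continuity
  have : (fun y : Fin r → G => fun i => k * y i * k⁻¹) '' U =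
      (fun y : Fin r → G => fun i => k⁻¹ * y i * k⁻¹⁻¹) ⁻¹' U := by
    ext y
    simp only [Set.mem_image, Set.mem_preimage]
    constructor
    · rintro ⟨x, hxU, rfl⟩
      convert hxU using 2 with i
      group
    · intro hy
      refine ⟨_, hy, ?_⟩
      funext i
      group
  rw [this]
  exact hU.preimage hc

/-- A `K`-equivariant strong deformation retraction of `G` onto a subgroup `K` induces a
strong deformation retraction of `G^r/K` onto (the image of) `K^r/K`, where `K` acts by
diagonal conjugation. -/
theorem induced_sdr_on_conjugation_quotient
    (G : Type*) [Group G] [TopologicalSpace G] [IsTopologicalGroup G]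
    (K : Subgroup G) (r : ℕ) (H : ℝ × G → G)
    (Hcont : ContinuousOn H (Set.Icc (0:ℝ) 1 ×ˢ Set.univ))
    (H0 : ∀ g, H (0, g) = g)
    (H1 : ∀ g, H (1, g) ∈ K)
    (Hfix : ∀ t ∈ Set.Icc (0:ℝ) 1, ∀ k ∈ K, H (t, k) = k)
    (Heq : ∀ t ∈ Set.Icc (0:ℝ) 1, ∀ k ∈ K, ∀ g,
      H (t, k * g * k⁻¹) = k * H (t, g) * k⁻¹) :
    ∃ H' : ℝ × Quotient (conjKSetoid G K r) → Quotient (conjKSetoid G K r),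
      (∀ t ∈ Set.Icc (0:ℝ) 1, ∀ x : Fin r → G,
        H' (t, Quotient.mk (conjKSetoid G K r) x) =
          Quotient.mk (conjKSetoid G K r) (fun i => H (t, x i))) ∧
      ContinuousOn H' (Set.Icc (0:ℝ) 1 ×ˢ Set.univ) ∧
      (∀ q, H' (0, q) = q) ∧
      (∀ q, H' (1, q) ∈ {q' | ∃ x : Fin r → G, (∀ i, x i ∈ K) ∧
        q' = Quotient.mk (conjKSetoid G K r) x}) ∧
      (∀ t ∈ Set.Icc (0:ℝ) 1, ∀ q ∈ {q' | ∃ x : Fin r → G, (∀ i, x i ∈ K) ∧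
        q' = Quotient.mk (conjKSetoid G K r) x}, H' (t, q) = q) := by
  classical
  set S := conjKSetoid G K r with hS
  -- clamp the time parameter into [0,1]
  set proj : ℝ → ℝ := fun t => max 0 (min t 1) with hprojdef
  have hproj_mem : ∀ t, proj t ∈ Set.Icc (0:ℝ) 1 := fun t =>
    ⟨le_max_left _ _, max_le (by norm_num) (min_le_right _ _)⟩
  have hproj_cont : Continuous proj := continuous_const.max (continuous_id.min continuous_const)
  have hproj_eq : ∀ t ∈ Set.Icc (0:ℝ) 1, proj t = t := by
    rintro t ⟨h0, h1⟩
    simp [hprojdef, min_eq_left h1, max_eq_right h0]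
  -- the lifted homotopy upstairs
  set F : ℝ × (Fin r → G) → Fin r → G := fun p i => H (proj p.1, p.2 i) with hFdef
  have hFcont : Continuous F := by
    refine continuous_pi fun i => Hcont.comp_continuous ?_ (fun p => ⟨hproj_mem _, trivial⟩)
    exact (hproj_cont.comp continuous_fst).prodMk
      ((continuous_apply i).comp continuous_snd)
  -- well-definedness of the descent
  have hwd : ∀ t : ℝ, ∀ x y : Fin r → G, S.r x y →
      (Quotient.mk S (F (t, x)) = Quotient.mk S (F (t, y))) := by
    rintro t x y ⟨k, hkK, hk⟩
    refine Quotient.sound ⟨k, hkK, fun i => ?_⟩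
    show H (proj t, y i) = k * H (proj t, x i) * k⁻¹
    rw [hk i, Heq (proj t) (hproj_mem t) k hkK]
  refine ⟨fun p => Quotient.lift (fun x => Quotient.mk S (F (p.1, x)))
    (fun x y h => hwd p.1 x y h) p.2, ?_, ?_, ?_, ?_, ?_⟩
  · intro t ht x
    simp only [Quotient.lift_mk]
    congr 1
    funext i
    rw [hFdef]
    simp [hproj_eq t ht]
  · -- continuity
    have hmk := conjK_mk_isOpenQuotientMap G K r
    have hq : IsOpenQuotientMap (Prod.map (id : ℝ → ℝ) (Quotient.mk S)) :=
      IsOpenQuotientMap.id.prodMap hmk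
    have : Continuous fun p : ℝ × Quotient S =>
        Quotient.lift (fun x => Quotient.mk S (F (p.1, x)))
          (fun x y h => hwd p.1 x y h) p.2 := by
      rw [← hq.continuous_comp_iff]
      exact continuous_quotient_mk'.comp hFcont
    exact this.continuousOn
  · intro q
    induction q using Quotient.ind with
    | _ x =>
      simp only [Quotient.lift_mk]
      congr 1
      funext i
      rw [hFdef]
      simp only
      rw [hproj_eq 0 ⟨le_refl _, by norm_num⟩, H0]
  · intro q
    induction q using Quotient.ind with
    | _ x =>
      refine ⟨fun i => H (1, x i), fun i => H1 (x i), ?_⟩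
      simp only [Quotient.lift_mk]
      congr 1
      funext i
      rw [hFdef]
      simp only
      rw [hproj_eq 1 ⟨by norm_num, le_refl _⟩]
  · rintro t ht q ⟨x, hx, rfl⟩
    simp only [Quotient.lift_mk]
    congr 1
    funext i
    rw [hFdef]
    simp only
    rw [hproj_eq t ht, Hfix t ht (x i) (hx i)]
end

section
/- A tuple (g₁,…,g_r) ∈ GL(n,ℂ)^r is a minimal vector for the conjugation action of GL(n,ℂ) on (ℂ^{n×n})^r with the norm ‖(X₁,…,X_r)‖² = Σᵢ tr(Xᵢ* Xᵢ) if and only if Σᵢ gᵢ* gᵢ = Σᵢ gᵢ gᵢ*. -/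
open Matrix

section KNAux

variable {n r : ℕ}

private lemma KN_retrace (m : Matrix (Fin n) (Fin n) ℂ) :
    ((mᴴ * m).trace).re = ∑ b, ∑ a, Complex.normSq (m a b) := by
  simp only [Matrix.trace, Matrix.diag_apply, Matrix.mul_apply, Matrix.conjTranspose_apply,
    Complex.re_sum]
  congr 1; ext b; congr 1; ext a
  rw [Complex.star_def, ← Complex.normSq_eq_conj_mul_self, Complex.ofReal_re]

private lemma KN_rowsum (m : Matrix (Fin n) (Fin n) ℂ) (a : Fin n) :
    ((m * mᴴ) a a).re = ∑ b, Complex.normSq (m a b) := by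
  simp only [Matrix.mul_apply, Matrix.conjTranspose_apply, Complex.re_sum]
  congr 1; ext b
  rw [Complex.star_def, Complex.mul_conj, Complex.ofReal_re]

private lemma KN_colsum (m : Matrix (Fin n) (Fin n) ℂ) (b : Fin n) :
    ((mᴴ * m) b b).re = ∑ a, Complex.normSq (m a b) := by
  simp only [Matrix.mul_apply, Matrix.conjTranspose_apply, Complex.re_sum]
  congr 1; ext a
  rw [Complex.star_def, ← Complex.normSq_eq_conj_mul_self, Complex.ofReal_re]

private lemma KN_L2 (c e : Fin n → ℝ) (m : Matrix (Fin n) (Fin n) ℂ) :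
    ((mᴴ * diagonal (fun a => (c a : ℂ)) * m * diagonal (fun b => (e b : ℂ))).trace).re
      = ∑ b, ∑ a, c a * e b * Complex.normSq (m a b) := by
  have h1 : ∀ b, (mᴴ * diagonal (fun a => (c a : ℂ)) * m * diagonal (fun b => (e b : ℂ))) b b
      = ∑ a, star (m a b) * (c a : ℂ) * m a b * (e b : ℂ) := by
    intro b
    rw [Matrix.mul_diagonal, Matrix.mul_apply, Finset.sum_mul]
    refine Finset.sum_congr rfl fun a _ => ?_
    rw [Matrix.mul_diagonal, Matrix.conjTranspose_apply]
  rw [Matrix.trace]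
  simp only [Matrix.diag_apply, h1, Complex.re_sum]
  congr 1; ext b; congr 1; ext a
  have h2 : star (m a b) * (c a : ℂ) * m a b * (e b : ℂ)
      = ((c a * e b * Complex.normSq (m a b) : ℝ) : ℂ) := by
    push_cast
    rw [Complex.normSq_eq_conj_mul_self, Complex.star_def]
    ring
  rw [h2, Complex.ofReal_re]

/-- Frobenius norm (re of trace form) of `diagonal c * m * diagonal e` for real `c`, `e`. -/
private lemma KN_Dnorm (c e : Fin n → ℝ) (m : Matrix (Fin n) (Fin n) ℂ) :
    (((diagonal (fun a => (c a : ℂ)) * m * diagonal (fun b => (e b : ℂ)))ᴴ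
        * (diagonal (fun a => (c a : ℂ)) * m * diagonal (fun b => (e b : ℂ)))).trace).re
      = ∑ b, ∑ a, (c a * c a) * ((e b * e b) * Complex.normSq (m a b)) := by
  rw [KN_retrace]
  congr 1; ext b; congr 1; ext a
  rw [Matrix.mul_diagonal, Matrix.diagonal_mul]
  simp only [Complex.normSq_mul, Complex.normSq_ofReal]
  ring

private lemma KN_conj_sum_left {u : Matrix (Fin n) (Fin n) ℂ} (hu : u * uᴴ = 1)
    (m : Fin r → Matrix (Fin n) (Fin n) ℂ) :
    ∑ i, ((uᴴ * m i * u) * (uᴴ * m i * u)ᴴ) = uᴴ * (∑ i, m i * (m i)ᴴ) * u := by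
  have hu' : ∀ X : Matrix (Fin n) (Fin n) ℂ, u * (uᴴ * X) = X := fun X => by
    rw [← Matrix.mul_assoc, hu, Matrix.one_mul]
  rw [Finset.mul_sum, Finset.sum_mul]
  refine Finset.sum_congr rfl fun i _ => ?_
  simp only [conjTranspose_mul, conjTranspose_conjTranspose, Matrix.mul_assoc, hu']

private lemma KN_conj_sum_right {u : Matrix (Fin n) (Fin n) ℂ} (hu : u * uᴴ = 1)
    (m : Fin r → Matrix (Fin n) (Fin n) ℂ) :
    ∑ i, ((uᴴ * m i * u)ᴴ * (uᴴ * m i * u)) = uᴴ * (∑ i, (m i)ᴴ * m i) * u := by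
  have hu' : ∀ X : Matrix (Fin n) (Fin n) ℂ, u * (uᴴ * X) = X := fun X => by
    rw [← Matrix.mul_assoc, hu, Matrix.one_mul]
  rw [Finset.mul_sum, Finset.sum_mul]
  refine Finset.sum_congr rfl fun i _ => ?_
  simp only [conjTranspose_mul, conjTranspose_conjTranspose, Matrix.mul_assoc, hu']

private lemma KN_corr (ℓ : Fin n → ℝ) (m : Fin r → Matrix (Fin n) (Fin n) ℂ) :
    ∑ i, ∑ b, ∑ a, (ℓ a - ℓ b) * Complex.normSq (m i a b)
      = ∑ a, ℓ a * ((∑ i, m i * (m i)ᴴ) a a).re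
        - ∑ b, ℓ b * ((∑ i, (m i)ᴴ * m i) b b).re := by
  have hr : ∀ a, ((∑ i, m i * (m i)ᴴ) a a).re = ∑ i, ∑ b, Complex.normSq (m i a b) := by
    intro a
    rw [Matrix.sum_apply, Complex.re_sum]
    exact Finset.sum_congr rfl fun i _ => KN_rowsum (m i) a
  have hc : ∀ b, ((∑ i, (m i)ᴴ * m i) b b).re = ∑ i, ∑ a, Complex.normSq (m i a b) := by
    intro b
    rw [Matrix.sum_apply, Complex.re_sum]
    exact Finset.sum_congr rfl fun i _ => KN_colsum (m i) b
  simp only [hr, hc, sub_mul, Finset.sum_sub_distrib, Finset.mul_sum]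
  congr 1
  · rw [show (∑ i, ∑ b, ∑ a : Fin n, ℓ a * Complex.normSq (m i a b))
        = ∑ i, ∑ a, ∑ b : Fin n, ℓ a * Complex.normSq (m i a b) from
      Finset.sum_congr rfl fun i _ => Finset.sum_comm ..]
    exact Finset.sum_comm ..
  · exact Finset.sum_comm ..

private lemma KN_diag_exp_one (d : Fin n → ℝ) :
    diagonal (fun a => (Real.exp (d a) : ℂ)) * diagonal (fun a => (Real.exp (-(d a)) : ℂ))
      = 1 := by
  rw [Matrix.diagonal_mul_diagonal]
  have h1 : ∀ a : Fin n, (Real.exp (d a) : ℂ) * (Real.exp (-(d a)) : ℂ) = 1 := by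
    intro a
    rw [← Complex.ofReal_mul, ← Real.exp_add, add_neg_cancel, Real.exp_zero, Complex.ofReal_one]
  simp only [h1]
  exact Matrix.diagonal_one

private lemma KN_inv_trace {u : Matrix (Fin n) (Fin n) ℂ} (hu : u * uᴴ = 1)
    (x : Matrix (Fin n) (Fin n) ℂ) :
    ((uᴴ * x * u)ᴴ * (uᴴ * x * u)).trace = (xᴴ * x).trace := by
  have hu' : ∀ X : Matrix (Fin n) (Fin n) ℂ, u * (uᴴ * X) = X := fun X => by
    rw [← Matrix.mul_assoc, hu, Matrix.one_mul]
  have e1 : (uᴴ * x * u)ᴴ * (uᴴ * x * u) = uᴴ * (xᴴ * x) * u := by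
    simp only [conjTranspose_mul, conjTranspose_conjTranspose, Matrix.mul_assoc, hu']
  rw [e1, Matrix.trace_mul_cycle, ← Matrix.mul_assoc, hu, Matrix.one_mul]

end KNAux


/-- A tuple of invertible matrices is a minimal vector for the simultaneous
conjugation action of `GL(n,ℂ)` (with the Frobenius norm) iff `∑ gᵢᴴ gᵢ = ∑ gᵢ gᵢᴴ`. -/
theorem minimal_vector_iff_kempf_ness (n r : ℕ)
    (g : Fin r → Matrix (Fin n) (Fin n) ℂ) (hg : ∀ i, IsUnit (g i)) :
    (∀ h : Matrix (Fin n) (Fin n) ℂ, IsUnit h →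
      (∑ i, ((g i)ᴴ * g i).trace).re ≤
        (∑ i, ((h * g i * h⁻¹)ᴴ * (h * g i * h⁻¹)).trace).re) ↔
      ∑ i, (g i)ᴴ * g i = ∑ i, g i * (g i)ᴴ := by
  constructor
  · -- minimality → moment map zero
    intro hmin
    set A := ∑ i, g i * (g i)ᴴ with hA_def
    set B := ∑ i, (g i)ᴴ * g i with hB_def
    have hAh : A.IsHermitian := by
      show Aᴴ = A
      rw [hA_def, Matrix.conjTranspose_sum]
      exact Finset.sum_congr rfl fun i _ => Matrix.isHermitian_mul_conjTranspose_self (g i)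
    have hBh : B.IsHermitian := by
      show Bᴴ = B
      rw [hB_def, Matrix.conjTranspose_sum]
      exact Finset.sum_congr rfl fun i _ => Matrix.isHermitian_conjTranspose_mul_self (g i)
    have hD : (A - B).IsHermitian := hAh.sub hBh
    set u : Matrix (Fin n) (Fin n) ℂ := (hD.eigenvectorUnitary : Matrix (Fin n) (Fin n) ℂ)
      with hu_def
    have hu1 : u * uᴴ = 1 := by
      have := (Matrix.mem_unitaryGroup_iff).mp (hD.eigenvectorUnitary).2
      rwa [Matrix.star_eq_conjTranspose] at this
    have hu2 : uᴴ * u = 1 := by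
      have := (Matrix.mem_unitaryGroup_iff').mp (hD.eigenvectorUnitary).2
      rwa [Matrix.star_eq_conjTranspose] at this
    set dl : Fin n → ℝ := hD.eigenvalues with hdl_def
    have hspec : A - B = u * diagonal (fun a => (dl a : ℂ)) * uᴴ := by
      have := hD.spectral_theorem
      rw [Unitary.conjStarAlgAut_apply, Matrix.star_eq_conjTranspose] at this; exact this
    set m : Fin r → Matrix (Fin n) (Fin n) ℂ := fun i => uᴴ * g i * u with hm_def
    set c : Fin r → Fin n → Fin n → ℝ := fun i a b => Complex.normSq (m i a b) with hc_def
    set f : ℝ → ℝ :=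
      fun t => ∑ i, ∑ b, ∑ a, c i a b * Real.exp ((2 * dl a - 2 * dl b) * t) with hf_def
    have hft : ∀ t : ℝ,
        IsUnit (diagonal (fun a => (Real.exp (t * dl a) : ℂ)) * uᴴ) ∧
          f t = (∑ i,
            (((diagonal (fun a => (Real.exp (t * dl a) : ℂ)) * uᴴ) * g i
                * (diagonal (fun a => (Real.exp (t * dl a) : ℂ)) * uᴴ)⁻¹)ᴴ
              * ((diagonal (fun a => (Real.exp (t * dl a) : ℂ)) * uᴴ) * g i
                * (diagonal (fun a => (Real.exp (t * dl a) : ℂ)) * uᴴ)⁻¹)).trace).re := by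
      intro t
      set D := diagonal (fun a => (Real.exp (t * dl a) : ℂ)) with hD_def
      set D' := diagonal (fun a => (Real.exp (-(t * dl a)) : ℂ)) with hD'_def
      have hDD' : D * D' = 1 := KN_diag_exp_one (fun a => t * dl a)
      have hinv1 : (D * uᴴ) * (u * D') = 1 := by
        rw [Matrix.mul_assoc, ← Matrix.mul_assoc uᴴ u D', hu2, Matrix.one_mul, hDD']
      have hunit : IsUnit (D * uᴴ) := by
        have hd : (D * uᴴ).det * (u * D').det = 1 := by
          rw [← Matrix.det_mul, hinv1, Matrix.det_one]
        exact (Matrix.isUnit_iff_isUnit_det _).2 (IsUnit.of_mul_eq_one _ hd)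
      have hinv : (D * uᴴ)⁻¹ = u * D' := Matrix.inv_eq_right_inv hinv1
      refine ⟨hunit, ?_⟩
      have hconj : ∀ i, (D * uᴴ) * g i * (D * uᴴ)⁻¹ = D * m i * D' := by
        intro i
        rw [hinv]
        simp only [hm_def, Matrix.mul_assoc]
      rw [Complex.re_sum]
      have hterm : ∀ i, ((((D * uᴴ) * g i * (D * uᴴ)⁻¹)ᴴ
            * ((D * uᴴ) * g i * (D * uᴴ)⁻¹)).trace).re
          = ∑ b, ∑ a, c i a b * Real.exp ((2 * dl a - 2 * dl b) * t) := by
        intro i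
        rw [hconj i, hD_def, hD'_def,
          KN_Dnorm (fun a => Real.exp (t * dl a)) (fun a => Real.exp (-(t * dl a))) (m i)]
        refine Finset.sum_congr rfl fun b _ => Finset.sum_congr rfl fun a _ => ?_
        simp only [hc_def]
        rw [← Real.exp_add, ← Real.exp_add, ← mul_assoc, ← Real.exp_add,
          show t * dl a + t * dl a + (-(t * dl b) + -(t * dl b))
            = (2 * dl a - 2 * dl b) * t by ring]
        ring
      rw [hf_def]
      exact (Finset.sum_congr rfl fun i _ => hterm i).symm
    have hf0 : f 0 = (∑ i, ((g i)ᴴ * g i).trace).re := by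
      rw [hf_def, Complex.re_sum]
      simp only [mul_zero, Real.exp_zero, mul_one]
      refine Finset.sum_congr rfl fun i _ => ?_
      simp only [hc_def]
      rw [← KN_retrace (m i)]
      simp only [hm_def]
      exact congrArg Complex.re (KN_inv_trace hu1 (g i))
    have hmin2 : ∀ t : ℝ, f 0 ≤ f t := by
      intro t
      obtain ⟨hunit, heqt⟩ := hft t
      rw [hf0, heqt]
      exact hmin _ hunit
    have hderiv : HasDerivAt f (∑ i, ∑ b, ∑ a, c i a b * (2 * dl a - 2 * dl b)) 0 := by
      rw [hf_def]
      refine HasDerivAt.fun_sum fun i _ => HasDerivAt.fun_sum fun b _ => HasDerivAt.fun_sum fun a _ => ?_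
      have h1 : HasDerivAt (fun t : ℝ => (2 * dl a - 2 * dl b) * t) (2 * dl a - 2 * dl b) 0 := by
        simpa using (hasDerivAt_id (0 : ℝ)).const_mul (2 * dl a - 2 * dl b)
      have h3 := (h1.exp).const_mul (c i a b)
      simpa [Real.exp_zero] using h3
    have hS : ∑ i, ∑ b, ∑ a, c i a b * (2 * dl a - 2 * dl b) = 0 := by
      have hloc : IsLocalMin f 0 := Filter.Eventually.of_forall hmin2
      have h0 := hloc.deriv_eq_zero
      rwa [hderiv.deriv] at h0
    have hS' : ∑ i, ∑ b, ∑ a,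
        ((fun a => 2 * dl a) a - (fun a => 2 * dl a) b) * Complex.normSq (m i a b) = 0 := by
      rw [← hS]
      refine Finset.sum_congr rfl fun i _ => Finset.sum_congr rfl fun b _ =>
        Finset.sum_congr rfl fun a _ => ?_
      simp only [hc_def]
      ring
    rw [KN_corr] at hS'
    have hmm : ∑ i, m i * (m i)ᴴ = uᴴ * A * u := by
      simp only [hm_def, hA_def]; exact KN_conj_sum_left hu1 g
    have hmm' : ∑ i, (m i)ᴴ * m i = uᴴ * B * u := by
      simp only [hm_def, hB_def]; exact KN_conj_sum_right hu1 g
    rw [hmm, hmm'] at hS'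
    have hsub : uᴴ * A * u - uᴴ * B * u = diagonal (fun a => (dl a : ℂ)) := by
      rw [← Matrix.sub_mul, ← Matrix.mul_sub, hspec]
      calc uᴴ * (u * diagonal (fun a => (dl a : ℂ)) * uᴴ) * u
          = (uᴴ * u) * diagonal (fun a => (dl a : ℂ)) * (uᴴ * u) := by
            simp only [Matrix.mul_assoc]
        _ = diagonal (fun a => (dl a : ℂ)) := by rw [hu2, Matrix.one_mul, Matrix.mul_one]
    have hcomb : ∑ a, (fun a => 2 * dl a) a * ((uᴴ * A * u) a a).re
          - ∑ b, (fun a => 2 * dl a) b * ((uᴴ * B * u) b b).re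
        = ∑ a, 2 * dl a * dl a := by
      rw [← Finset.sum_sub_distrib]
      refine Finset.sum_congr rfl fun a _ => ?_
      rw [← mul_sub, ← Complex.sub_re, ← Matrix.sub_apply, hsub, Matrix.diagonal_apply_eq,
        Complex.ofReal_re]
    rw [hcomb] at hS'
    have hdl0 : ∀ a, dl a = 0 := by
      intro a
      have hnn : ∀ a ∈ (Finset.univ : Finset (Fin n)), 0 ≤ 2 * dl a * dl a := fun a _ => by
        nlinarith [mul_self_nonneg (dl a)]
      have h0 := (Finset.sum_eq_zero_iff_of_nonneg hnn).mp hS' a (Finset.mem_univ a)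
      nlinarith [mul_self_nonneg (dl a), h0]
    have hdz : diagonal (fun a => ((dl a : ℝ) : ℂ)) = 0 := by
      rw [show (fun a => ((dl a : ℝ) : ℂ)) = fun _ => (0 : ℂ) from
        funext fun a => by rw [hdl0 a, Complex.ofReal_zero], Matrix.diagonal_zero]
    have hAB : A - B = 0 := by
      rw [hspec, hdz, Matrix.mul_zero, Matrix.zero_mul]
    rw [hB_def, hA_def]
    exact (sub_eq_zero.mp hAB).symm
  · -- moment map zero → minimality
    intro heq h hh
    have hdet : IsUnit h.det := (Matrix.isUnit_iff_isUnit_det h).mp hh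
    have hdetH : IsUnit hᴴ.det := by rw [Matrix.det_conjTranspose]; exact hdet.star
    set P := hᴴ * h with hP_def
    have hPh : P.IsHermitian := Matrix.isHermitian_conjTranspose_mul_self h
    set u : Matrix (Fin n) (Fin n) ℂ := (hPh.eigenvectorUnitary : Matrix (Fin n) (Fin n) ℂ)
      with hu_def
    have hu1 : u * uᴴ = 1 := by
      have := (Matrix.mem_unitaryGroup_iff).mp (hPh.eigenvectorUnitary).2
      rwa [Matrix.star_eq_conjTranspose] at this
    have hu2 : uᴴ * u = 1 := by
      have := (Matrix.mem_unitaryGroup_iff').mp (hPh.eigenvectorUnitary).2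
      rwa [Matrix.star_eq_conjTranspose] at this
    set mu : Fin n → ℝ := hPh.eigenvalues with hmu_def
    have hspec : P = u * diagonal (fun a => (mu a : ℂ)) * uᴴ := by
      have := hPh.spectral_theorem
      rw [Unitary.conjStarAlgAut_apply, Matrix.star_eq_conjTranspose] at this; exact this
    have hdetP : IsUnit P.det := by
      rw [hP_def, Matrix.det_mul]; exact hdetH.mul hdet
    have hmupos : ∀ a, 0 < mu a := by
      intro a
      have h0 : 0 ≤ mu a := Matrix.eigenvalues_conjTranspose_mul_self_nonneg h a
      rcases h0.lt_or_eq with hlt | heq0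
      · exact hlt
      · exfalso
        have hprod : P.det = ∏ a, (mu a : ℂ) := hPh.det_eq_prod_eigenvalues
        have hz : P.det = 0 := by
          rw [hprod]
          exact Finset.prod_eq_zero (Finset.mem_univ a)
            (by rw [← heq0]; exact Complex.ofReal_zero)
        exact hdetP.ne_zero hz
    set dmu := diagonal (fun a => (mu a : ℂ)) with hdmu_def
    set dmu' := diagonal (fun a => (((mu a)⁻¹ : ℝ) : ℂ)) with hdmu'_def
    have hdd : dmu * dmu' = 1 := by
      rw [hdmu_def, hdmu'_def, Matrix.diagonal_mul_diagonal]
      have h1 : ∀ a : Fin n, (mu a : ℂ) * (((mu a)⁻¹ : ℝ) : ℂ) = 1 := fun a => by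
        rw [← Complex.ofReal_mul, mul_inv_cancel₀ (hmupos a).ne', Complex.ofReal_one]
      simp only [h1]
      exact Matrix.diagonal_one
    have hPinv : P⁻¹ = u * dmu' * uᴴ := by
      apply Matrix.inv_eq_right_inv
      rw [hspec]
      calc u * dmu * uᴴ * (u * dmu' * uᴴ)
          = u * (dmu * ((uᴴ * u) * (dmu' * uᴴ))) := by simp only [Matrix.mul_assoc]
        _ = 1 := by
            rw [hu2, Matrix.one_mul, ← Matrix.mul_assoc dmu dmu' uᴴ, hdd, Matrix.one_mul, hu1]
    have hQ : h⁻¹ * h⁻¹ᴴ = P⁻¹ := by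
      symm
      apply Matrix.inv_eq_right_inv
      rw [hP_def]
      calc hᴴ * h * (h⁻¹ * h⁻¹ᴴ) = hᴴ * ((h * h⁻¹) * h⁻¹ᴴ) := by simp only [Matrix.mul_assoc]
        _ = 1 := by
            rw [Matrix.mul_nonsing_inv _ hdet, Matrix.one_mul,
              Matrix.conjTranspose_nonsing_inv, Matrix.mul_nonsing_inv _ hdetH]
    set m : Fin r → Matrix (Fin n) (Fin n) ℂ := fun i => uᴴ * g i * u with hm_def
    have htr : ∀ i, ((h * g i * h⁻¹)ᴴ * (h * g i * h⁻¹)).trace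
        = ((m i)ᴴ * dmu * m i * dmu').trace := by
      intro i
      have e1 : (h * g i * h⁻¹)ᴴ * (h * g i * h⁻¹)
          = h⁻¹ᴴ * ((g i)ᴴ * P * g i) * h⁻¹ := by
        rw [hP_def]
        simp only [conjTranspose_mul, Matrix.mul_assoc]
      rw [e1, Matrix.trace_mul_cycle, hQ, Matrix.trace_mul_comm, hPinv, hspec]
      have e2 : (g i)ᴴ * (u * dmu * uᴴ) * g i * (u * dmu' * uᴴ)
          = ((g i)ᴴ * (u * dmu * uᴴ) * g i * (u * dmu')) * uᴴ := by
        simp only [Matrix.mul_assoc]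
      rw [e2, Matrix.trace_mul_comm]
      congr 1
      simp only [hm_def, conjTranspose_mul, conjTranspose_conjTranspose, Matrix.mul_assoc]
    have hre : ∀ i, (((m i)ᴴ * dmu * m i * dmu').trace).re
        = ∑ b, ∑ a, mu a * (mu b)⁻¹ * Complex.normSq (m i a b) := fun i =>
      KN_L2 mu (fun b => (mu b)⁻¹) (m i)
    have hcorr0 : ∑ i, ∑ b, ∑ a,
        ((fun a => Real.log (mu a)) a - (fun a => Real.log (mu a)) b)
          * Complex.normSq (m i a b) = 0 := by
      rw [KN_corr]
      have hmm : ∑ i, m i * (m i)ᴴ = uᴴ * (∑ i, g i * (g i)ᴴ) * u := by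
        simp only [hm_def]; exact KN_conj_sum_left hu1 g
      have hmm' : ∑ i, (m i)ᴴ * m i = uᴴ * (∑ i, (g i)ᴴ * g i) * u := by
        simp only [hm_def]; exact KN_conj_sum_right hu1 g
      rw [hmm, hmm', heq]
      exact sub_self _
    rw [Complex.re_sum, Complex.re_sum]
    have hLHS : ∀ i, (((g i)ᴴ * g i).trace).re = ∑ b, ∑ a, Complex.normSq (m i a b) := by
      intro i
      rw [← KN_retrace (m i)]
      refine congrArg Complex.re ?_
      simp only [hm_def]
      exact (KN_inv_trace hu1 (g i)).symm
    calc ∑ i, (((g i)ᴴ * g i).trace).re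
        = ∑ i, ∑ b, ∑ a, Complex.normSq (m i a b) :=
          Finset.sum_congr rfl fun i _ => hLHS i
      _ = ∑ i, ∑ b, ∑ a, (1 + ((fun a => Real.log (mu a)) a - (fun a => Real.log (mu a)) b))
            * Complex.normSq (m i a b) := by
          simp only [add_mul, one_mul, Finset.sum_add_distrib]
          rw [hcorr0, add_zero]
      _ ≤ ∑ i, ∑ b, ∑ a, mu a * (mu b)⁻¹ * Complex.normSq (m i a b) := by
          refine Finset.sum_le_sum fun i _ => Finset.sum_le_sum fun b _ =>
            Finset.sum_le_sum fun a _ => ?_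
          have hexp : mu a * (mu b)⁻¹ = Real.exp (Real.log (mu a) - Real.log (mu b)) := by
            rw [Real.exp_sub, Real.exp_log (hmupos a), Real.exp_log (hmupos b),
              div_eq_mul_inv]
          rw [hexp]
          exact mul_le_mul_of_nonneg_right
            (by linarith [Real.add_one_le_exp (Real.log (mu a) - Real.log (mu b))])
            (Complex.normSq_nonneg _)
      _ = ∑ i, (((h * g i * h⁻¹)ᴴ * (h * g i * h⁻¹)).trace).re := by
          refine Finset.sum_congr rfl fun i _ => ?_
          rw [htr i, hre i]
end

section
/- The set of normal invertible matrices {g ∈ GL(n,ℂ) : g* g = g g*} deformation retracts onto U(n) via the polar retraction, and hence U(n) is a strong deformation retract of the normal invertible matrices. -/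
open Matrix
open scoped Matrix.Norms.L2Operator

noncomputable instance matrixCStarAlgebra (n : ℕ) :
    CStarAlgebra (Matrix (Fin n) (Fin n) ℂ) := Matrix.instCStarAlgebra

namespace PolarRetractAux

variable {n : ℕ}

local notation "M" => Matrix (Fin n) (Fin n) ℂ

lemma spectrum_pos {g : M} (hg : IsUnit g) : ∀ x ∈ spectrum ℝ (gᴴ * g), 0 < x := by
  intro x hx
  have hunit : IsUnit (gᴴ * g) := by
    have := hg.star.mul hg
    rwa [star_eq_conjTranspose] at this
  have hx0 : x ≠ 0 := by
    rintro rfl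
    exact (spectrum.zero_mem_iff ℝ).mp hx hunit
  have hH : (gᴴ * g).IsHermitian := isHermitian_conjTranspose_mul_self g
  rw [hH.spectrum_real_eq_range_eigenvalues] at hx
  obtain ⟨i, rfl⟩ := hx
  exact lt_of_le_of_ne (g.eigenvalues_conjTranspose_mul_self_nonneg i) (Ne.symm hx0)

open scoped MatrixOrder in
lemma exp_log_conj_mul {g : M} (hg : IsUnit g) :
    NormedSpace.exp (CFC.log (gᴴ * g)) = gᴴ * g :=
  CFC.exp_log _ ((StarOrderedRing.isStrictlyPositive_iff_spectrum_pos (R := ℝ) _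
    (isHermitian_conjTranspose_mul_self g).isSelfAdjoint).mpr (spectrum_pos hg))

lemma uniq_log {g X : M} (hg : IsUnit g) (hX : X.IsHermitian)
    (h : gᴴ * g = NormedSpace.exp ((2 : ℂ) • X)) :
    X = (2⁻¹ : ℝ) • CFC.log (gᴴ * g) := by
  have h2 : ((2 : ℂ) • X) = ((2 : ℝ) • X) := by
    rw [← algebraMap_smul ℂ (2 : ℝ) X]
    norm_num
  have hsa : IsSelfAdjoint ((2 : ℝ) • X) :=
    IsSelfAdjoint.smul (r := (2 : ℝ)) (star_trivial _) hX.isSelfAdjoint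
  have hlog : CFC.log (gᴴ * g) = (2 : ℝ) • X := by
    rw [h, h2, CFC.log_exp ((2 : ℝ) • X) hsa]
  rw [hlog, smul_smul]
  norm_num

/-- The Hermitian "half-logarithm" of `gᴴ g`. -/
noncomputable def Xmat (g : M) : M := (2⁻¹ : ℝ) • CFC.log (gᴴ * g)

/-- The polar retraction homotopy. -/
noncomputable def H : ℝ × M → M :=
  fun p => p.2 * NormedSpace.exp (-(p.1 : ℂ) • Xmat p.2)

lemma H_eq (t : ℝ) (g : M) :
    H (t, g) = g * NormedSpace.exp ((-(t / 2) : ℝ) • CFC.log (gᴴ * g)) := by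
  have : -(t : ℂ) • Xmat g = ((-(t / 2)) : ℝ) • CFC.log (gᴴ * g) := by
    rw [Xmat, ← algebraMap_smul ℂ ((2⁻¹ : ℝ)) (CFC.log (gᴴ * g)),
      ← algebraMap_smul ℂ ((-(t / 2)) : ℝ) (CFC.log (gᴴ * g)), smul_smul]
    congr 1
    simp [Complex.coe_algebraMap]
    push_cast
    ring
  rw [H, this]

lemma commute_aeval {a b : M} (hab : Commute b a) (p : Polynomial ℝ) :
    Commute b (Polynomial.aeval a p) := by
  induction p using Polynomial.induction_on with
  | C r => simpa using (Algebra.commute_algebraMap_right r b)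
  | add p q hp hq =>
      rw [_root_.map_add]
      exact hp.add_right hq
  | monomial k r hk =>
      simp only [_root_.map_mul, Polynomial.aeval_C, _root_.map_pow, Polynomial.aeval_X]
      exact (Algebra.commute_algebraMap_right r b).mul_right (hab.pow_right (k + 1))

lemma commute_cfc {a b : M} (ha : IsSelfAdjoint a) (hab : Commute b a)
    (f : ℝ → ℝ) (hf : ContinuousOn f (spectrum ℝ a)) : Commute b (cfc f a) := by
  have hfin : (spectrum ℝ a).Finite := Matrix.finite_real_spectrum
  set p : Polynomial ℝ := Lagrange.interpolate hfin.toFinset id f with hp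
  have hinj : Set.InjOn (id : ℝ → ℝ) hfin.toFinset := Function.injective_id.injOn
  have heq : ∀ x ∈ spectrum ℝ a, f x = p.eval x := by
    intro x hx
    have hx' : x ∈ hfin.toFinset := hfin.mem_toFinset.mpr hx
    rw [hp]
    simpa using (Lagrange.eval_interpolate_at_node f hinj hx').symm
  have : cfc f a = Polynomial.aeval a p := by
    rw [cfc_congr heq, cfc_polynomial p a]
  rw [this]
  exact commute_aeval hab p

lemma L_selfadjoint (g : M) : IsSelfAdjoint (CFC.log (gᴴ * g)) := IsSelfAdjoint.log (A := M) (a := gᴴ * g)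

/-- The one-parameter family `(gᴴ g)^s`. -/
noncomputable def E (g : M) (s : ℝ) : M := NormedSpace.exp (s • CFC.log (gᴴ * g))

lemma E_add (g : M) (s s' : ℝ) : E g s * E g s' = E g (s + s') := by
  rw [E, E, E, add_smul]
  letI : NormedAlgebra ℚ M := NormedAlgebra.restrictScalars ℚ ℂ M
  exact (NormedSpace.exp_add_of_commute (((Commute.refl _).smul_left s).smul_right s')).symm

lemma E_zero (g : M) : E g 0 = 1 := by simp [E, NormedSpace.exp_zero]

lemma E_star (g : M) (s : ℝ) : (E g s)ᴴ = E g s := by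
  rw [E, ← star_eq_conjTranspose, NormedSpace.star_exp]
  congr 1
  rw [star_smul, star_trivial, (L_selfadjoint g).star_eq]

lemma E_one {g : M} (hg : IsUnit g) : E g 1 = gᴴ * g := by
  rw [E, one_smul]; exact exp_log_conj_mul hg

lemma H_eq' (t : ℝ) (g : M) : H (t, g) = g * E g (-(t / 2)) := H_eq t g

lemma isUnit_E (g : M) (s : ℝ) : IsUnit (E g s) := by
  refine ⟨⟨E g s, E g (-s), ?_, ?_⟩, rfl⟩ <;> rw [E_add] <;> simp [E_zero]

lemma commute_E {g : M} (hg : IsUnit g) (hn : gᴴ * g = g * gᴴ) (s : ℝ) :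
    Commute g (E g s) := by
  have hc : Commute g (gᴴ * g) := by
    rw [Commute, SemiconjBy, ← mul_assoc, ← hn]
  have hflog : ContinuousOn Real.log (spectrum ℝ (gᴴ * g)) := by
    apply Real.continuousOn_log.mono
    intro x hx
    simpa using ne_of_gt (spectrum_pos hg x hx)
  have hL : Commute g (CFC.log (gᴴ * g)) :=
    commute_cfc (isHermitian_conjTranspose_mul_self g).isSelfAdjoint hc Real.log hflog
  exact (hL.smul_right s).exp_right

lemma H_conj_mul {g : M} (hg : IsUnit g) (t : ℝ) :
    (H (t, g))ᴴ * H (t, g) = E g (1 - t) := by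
  rw [H_eq', conjTranspose_mul, E_star]
  calc E g (-(t / 2)) * gᴴ * (g * E g (-(t / 2)))
      = E g (-(t / 2)) * (gᴴ * g) * E g (-(t / 2)) := by
        simp only [mul_assoc]
    _ = E g (-(t / 2)) * E g 1 * E g (-(t / 2)) := by rw [E_one hg]
    _ = E g (1 - t) := by rw [E_add, E_add]; ring_nf


lemma isUnit_of_spectrum_pos {a : M} (h : ∀ x ∈ spectrum ℝ a, 0 < x) : IsUnit a := by
  by_contra hu
  exact lt_irrefl (0 : ℝ) (h 0 ((spectrum.zero_mem_iff ℝ).mpr hu))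

lemma continuousOn_log [Nonempty (Fin n)] :
    ContinuousOn (fun a : M => CFC.log a)
      {a : M | IsSelfAdjoint a ∧ ∀ x ∈ spectrum ℝ a, 0 < x} := by
  intro A₀ hA₀mem
  obtain ⟨hA₀sa, hA₀pos⟩ := hA₀mem
  have hA₀unit : IsUnit A₀ := isUnit_of_spectrum_pos hA₀pos
  set c : ℝ := ‖Ring.inverse A₀‖ + 1 with hc
  have hcpos : 0 < c := by positivity
  set b : ℝ := ‖A₀‖ + 1 with hb
  have hbpos : 0 < b := by positivity
  -- spectral inclusion under norm control
  have hspec : ∀ A : M, (∀ x ∈ spectrum ℝ A, 0 < x) → ‖A‖ ≤ b → ‖Ring.inverse A‖ ≤ c →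
      spectrum ℝ A ⊆ Set.Icc c⁻¹ b := by
    intro A hpos hAb hAc x hx
    have hx0 : 0 < x := hpos x hx
    have hAunit : IsUnit A := isUnit_of_spectrum_pos hpos
    constructor
    · -- lower bound
      have hxmem : ((Units.mk0 x hx0.ne' : ℝˣ) : ℝ) ∈ spectrum ℝ ((hAunit.unit : Mˣ) : M) := by
        simpa [hAunit.unit_spec] using hx
      have hxinv : (((Units.mk0 x hx0.ne')⁻¹ : ℝˣ) : ℝ) ∈
          spectrum ℝ (((hAunit.unit⁻¹ : Mˣ)) : M) := spectrum.inv_mem_iff.mp hxmem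
      have hxinv' : x⁻¹ ∈ spectrum ℝ (Ring.inverse A) := by
        have hinvA : Ring.inverse A = ((hAunit.unit⁻¹ : Mˣ) : M) := by
          conv_lhs => rw [← hAunit.unit_spec]
          rw [Ring.inverse_unit]
        rw [hinvA]
        simpa using hxinv
      have hnorm : x⁻¹ ≤ c := by
        have := spectrum.norm_le_norm_of_mem hxinv'
        have habs : |x⁻¹| ≤ ‖Ring.inverse A‖ := this
        exact le_trans (le_abs_self _) (le_trans habs hAc)
      exact inv_le_of_inv_le₀ hx0 hnorm
    · -- upper bound
      have := spectrum.norm_le_norm_of_mem hx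
      exact le_trans (le_abs_self x) (le_trans this hAb)
  -- the neighborhood where the norm bounds hold
  have hU : {A : M | ‖A‖ ≤ b ∧ ‖Ring.inverse A‖ ≤ c} ∈ nhds A₀ := by
    have h1 : {A : M | ‖A‖ < b} ∈ nhds A₀ :=
      continuous_norm.continuousAt (Iio_mem_nhds (by simp [hb]))
    have h2 : {A : M | ‖Ring.inverse A‖ < c} ∈ nhds A₀ :=
      ((NormedRing.inverse_continuousAt hA₀unit.unit).norm) (Iio_mem_nhds (by simp [hc]))
    filter_upwards [h1, h2] with A hA1 hA2
    exact ⟨le_of_lt hA1, le_of_lt hA2⟩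
  obtain ⟨δ₂, hδ₂pos, hball⟩ := Metric.mem_nhds_iff.mp hU
  rw [Metric.continuousWithinAt_iff]
  intro ε hε
  -- polynomial approximation of log on [c⁻¹, b]
  have hsub0 : Set.Icc (c⁻¹ : ℝ) b ⊆ {(0 : ℝ)}ᶜ := by
    intro x hx
    simp only [Set.mem_compl_iff, Set.mem_singleton_iff]
    have : (0 : ℝ) < c⁻¹ := by positivity
    exact ne_of_gt (lt_of_lt_of_le this hx.1)
  have hlogcont : Continuous ((Set.Icc (c⁻¹ : ℝ) b).restrict Real.log) :=
    (Real.continuousOn_log.mono hsub0).restrict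
  set flog : C(Set.Icc (c⁻¹ : ℝ) b, ℝ) :=
    ⟨(Set.Icc (c⁻¹ : ℝ) b).restrict Real.log, hlogcont⟩ with hflog
  obtain ⟨p, hp⟩ := exists_polynomial_near_continuousMap c⁻¹ b flog (ε / 3) (by positivity)
  have hpx : ∀ x ∈ Set.Icc (c⁻¹ : ℝ) b, |Real.log x - p.eval x| ≤ ε / 3 := by
    intro x hx
    have h1 : ‖(p.toContinuousMapOn (Set.Icc (c⁻¹ : ℝ) b) - flog) ⟨x, hx⟩‖ ≤
        ‖p.toContinuousMapOn (Set.Icc (c⁻¹ : ℝ) b) - flog‖ :=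
      ContinuousMap.norm_coe_le_norm (p.toContinuousMapOn (Set.Icc (c⁻¹ : ℝ) b) - flog) ⟨x, hx⟩
    have h2 := le_trans h1 (le_of_lt hp)
    rw [hflog] at h2
    simp only [ContinuousMap.sub_apply, Polynomial.toContinuousMapOn_apply,
      Polynomial.toContinuousMap_apply, ContinuousMap.coe_mk, Set.restrict_apply,
      Real.norm_eq_abs] at h2
    rw [abs_sub_comm]
    exact h2
  -- the cfc error bound
  have hkey : ∀ A : M, A ∈ {a : M | IsSelfAdjoint a ∧ ∀ x ∈ spectrum ℝ a, 0 < x} →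
      spectrum ℝ A ⊆ Set.Icc c⁻¹ b → ‖CFC.log A - Polynomial.aeval A p‖ ≤ ε / 3 := by
    intro A hA hAspec
    obtain ⟨hAsa, hApos⟩ := hA
    have hlogA : ContinuousOn Real.log (spectrum ℝ A) := by
      apply Real.continuousOn_log.mono
      intro x hx
      simpa using ne_of_gt (hApos x hx)
    have heq : CFC.log A - Polynomial.aeval A p = cfc (fun x => Real.log x - p.eval x) A := by
      rw [cfc_sub Real.log (fun x => p.eval x) A hlogA (Polynomial.continuousOn p),
        cfc_polynomial p A, CFC.log]
    rw [heq]
    apply norm_cfc_le (by positivity)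
    intro x hx
    simpa [Real.norm_eq_abs] using hpx x (hAspec hx)
  -- continuity of the polynomial part
  have hpoly : ContinuousAt (fun A : M => Polynomial.aeval A p) A₀ :=
    Polynomial.continuousAt_aeval p
  rw [Metric.continuousAt_iff] at hpoly
  obtain ⟨δ₁, hδ₁pos, hδ₁⟩ := hpoly (ε / 3) (by positivity)
  refine ⟨min δ₁ δ₂, by positivity, ?_⟩
  intro A hA hdist
  obtain ⟨hAsa, hApos⟩ := hA
  have hAU : A ∈ {A : M | ‖A‖ ≤ b ∧ ‖Ring.inverse A‖ ≤ c} :=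
    hball (by simpa [Metric.mem_ball] using lt_of_lt_of_le hdist (min_le_right _ _))
  have hA₀U : A₀ ∈ {A : M | ‖A‖ ≤ b ∧ ‖Ring.inverse A‖ ≤ c} :=
    hball (Metric.mem_ball_self hδ₂pos)
  have hAspec := hspec A hApos hAU.1 hAU.2
  have hA₀spec := hspec A₀ hA₀pos hA₀U.1 hA₀U.2
  have e1 := hkey A ⟨hAsa, hApos⟩ hAspec
  have e3 := hkey A₀ ⟨hA₀sa, hA₀pos⟩ hA₀spec
  have e2 : dist (Polynomial.aeval A p) (Polynomial.aeval A₀ p) < ε / 3 :=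
    hδ₁ (lt_of_lt_of_le hdist (min_le_left _ _))
  calc dist (CFC.log A) (CFC.log A₀)
      ≤ dist (CFC.log A) (Polynomial.aeval A p) +
        dist (Polynomial.aeval A p) (Polynomial.aeval A₀ p) +
        dist (Polynomial.aeval A₀ p) (CFC.log A₀) := dist_triangle4 _ _ _ _
    _ < ε := by
        rw [dist_eq_norm, dist_eq_norm (Polynomial.aeval A₀ p)]
        have e3' : ‖Polynomial.aeval A₀ p - CFC.log A₀‖ ≤ ε / 3 := by
          rw [norm_sub_rev]; exact e3
        linarith

lemma continuousOn_H :
    ContinuousOn (H (n := n))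
      (Set.Icc (0:ℝ) 1 ×ˢ {g : M | IsUnit g ∧ gᴴ * g = g * gᴴ}) := by
  rcases Nat.eq_zero_or_pos n with hn | hn
  · subst hn
    have hsub : Subsingleton (Matrix (Fin 0) (Fin 0) ℂ) :=
      inferInstanceAs (Subsingleton (Fin 0 → Fin 0 → ℂ))
    exact (continuous_snd.continuousOn).congr fun p _ => Subsingleton.elim _ _
  · haveI : Nonempty (Fin n) := Fin.pos_iff_nonempty.mp hn
    have hlog : ContinuousOn (fun p : ℝ × M => CFC.log (p.2ᴴ * p.2))
        (Set.Icc (0:ℝ) 1 ×ˢ {g : M | IsUnit g ∧ gᴴ * g = g * gᴴ}) := by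
      apply continuousOn_log.comp
        ((continuous_snd.matrix_conjTranspose.matrix_mul continuous_snd).continuousOn)
      intro p hp
      exact ⟨(isHermitian_conjTranspose_mul_self p.2).isSelfAdjoint,
        spectrum_pos (hp.2.1)⟩
    have hmain : ContinuousOn
        (fun p : ℝ × M => p.2 * NormedSpace.exp ((-(p.1 / 2) : ℝ) • CFC.log (p.2ᴴ * p.2)))
        (Set.Icc (0:ℝ) 1 ×ˢ {g : M | IsUnit g ∧ gᴴ * g = g * gᴴ}) := by
      apply ContinuousOn.mul continuous_snd.continuousOn
      letI : NormedAlgebra ℚ M := NormedAlgebra.restrictScalars ℚ ℂ M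
      exact NormedSpace.exp_continuous.comp_continuousOn
        (((continuous_fst.div_const 2).neg.continuousOn).smul hlog)
    exact hmain.congr fun p _ => H_eq p.1 p.2

end PolarRetractAux

/-- The set of normal invertible matrices strongly deformation retracts onto `U(n)` via
the polar retraction `f_t(g) = g * exp (-tX)` (where `gᴴ g = exp (2X)`, `X` Hermitian). -/
theorem normal_matrices_deformation_retract_unitary (n : ℕ) :
    ∃ H : ℝ × Matrix (Fin n) (Fin n) ℂ → Matrix (Fin n) (Fin n) ℂ,
      (∀ (g X : Matrix (Fin n) (Fin n) ℂ), IsUnit g → X.IsHermitian →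
          gᴴ * g = NormedSpace.exp ((2 : ℂ) • X) →
          ∀ t : ℝ, H (t, g) = g * NormedSpace.exp (-(t : ℂ) • X)) ∧
      ContinuousOn H (Set.Icc (0:ℝ) 1 ×ˢ {g | IsUnit g ∧ gᴴ * g = g * gᴴ}) ∧
      (∀ g : Matrix (Fin n) (Fin n) ℂ, IsUnit g ∧ gᴴ * g = g * gᴴ → H (0, g) = g) ∧
      (∀ g : Matrix (Fin n) (Fin n) ℂ, IsUnit g ∧ gᴴ * g = g * gᴴ →
        (H (1, g))ᴴ * H (1, g) = 1) ∧
      (∀ t ∈ Set.Icc (0:ℝ) 1, ∀ g : Matrix (Fin n) (Fin n) ℂ,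
        IsUnit g ∧ gᴴ * g = g * gᴴ →
          IsUnit (H (t, g)) ∧ (H (t, g))ᴴ * H (t, g) = H (t, g) * (H (t, g))ᴴ) ∧
      (∀ t ∈ Set.Icc (0:ℝ) 1, ∀ k : Matrix (Fin n) (Fin n) ℂ, kᴴ * k = 1 → H (t, k) = k) := by
  refine ⟨PolarRetractAux.H (n := n), ?_, PolarRetractAux.continuousOn_H, ?_, ?_, ?_, ?_⟩
  · intro g X hg hX hexp t
    rw [PolarRetractAux.uniq_log hg hX hexp]
    rfl
  · intro g _
    rw [PolarRetractAux.H_eq' 0 g, show (-(0 / 2 : ℝ)) = 0 by norm_num, PolarRetractAux.E_zero, mul_one]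
  · intro g hg
    rw [PolarRetractAux.H_conj_mul hg.1 1, show (1 - 1 : ℝ) = 0 by norm_num, PolarRetractAux.E_zero]
  · intro t _ g hg
    obtain ⟨hg, hn⟩ := hg
    refine ⟨?_, ?_⟩
    · rw [PolarRetractAux.H_eq']
      exact hg.mul (PolarRetractAux.isUnit_E g _)
    · rw [PolarRetractAux.H_conj_mul hg t]
      have : PolarRetractAux.H (t, g) * (PolarRetractAux.H (t, g))ᴴ = PolarRetractAux.E g (1 - t) := by
        rw [PolarRetractAux.H_eq', conjTranspose_mul, PolarRetractAux.E_star]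
        calc g * PolarRetractAux.E g (-(t / 2)) * (PolarRetractAux.E g (-(t / 2)) * gᴴ)
            = g * (PolarRetractAux.E g (-(t / 2)) * PolarRetractAux.E g (-(t / 2))) * gᴴ := by
              simp only [mul_assoc]
          _ = g * PolarRetractAux.E g (-t) * gᴴ := by
              rw [PolarRetractAux.E_add, show (-(t / 2) + -(t / 2)) = -t by ring]
          _ = PolarRetractAux.E g (-t) * g * gᴴ := by rw [(PolarRetractAux.commute_E hg hn (-t)).eq]
          _ = PolarRetractAux.E g (-t) * (gᴴ * g) := by rw [mul_assoc, ← hn]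
          _ = PolarRetractAux.E g (-t) * PolarRetractAux.E g 1 := by rw [PolarRetractAux.E_one hg]
          _ = PolarRetractAux.E g (1 - t) := by rw [PolarRetractAux.E_add, show (-t + 1) = 1 - t by ring]
      rw [this]
  · intro t _ k hk
    rw [PolarRetractAux.H_eq', PolarRetractAux.E, hk, CFC.log_one, smul_zero, NormedSpace.exp_zero, mul_one]
end
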